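/- arXiv:1807.02190 — 2 statements merged into one kernel-verified Lean document; each statement's English description precedes it below -/
import Mathlib

section
/- Define C_{j_2 j_1} = ∫_t^T φ_{j_2}(y) ∫_t^y φ_{j_1}(x) dx dy for nonnegative integers j_1, j_2. Then C_{00} = Δ/2; for every integer j ≥ 1, C_{j, j−1} = Δ/(2√(4j²−1)) and C_{j−1, j} = −Δ/(2√(4j²−1)); and C_{j_2 j_1} = 0 in all remaining cases, i.e. whenever |j_1 − j_2| ≥ 2 or j_1 = j_2 ≥ 1. -/
open MeasureTheory

/-- The `n`-th Legendre polynomial, given by Rodrigues' formula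
`P_n(x) = (1/(2^n n!)) (d/dx)^n (x²−1)^n`. -/
noncomputable def legendreP (n : ℕ) (x : ℝ) : ℝ :=
  (1 / ((2 : ℝ) ^ n * (Nat.factorial n))) * iteratedDeriv n (fun y => (y ^ 2 - 1) ^ n) x


open Polynomial

noncomputable section LegAux


/-- The Legendre polynomial as a polynomial. -/
def legP (n : ℕ) : ℝ[X] :=
  C (1 / ((2:ℝ) ^ n * (Nat.factorial n))) * derivative^[n] ((((X:ℝ[X])^2 - 1))^n)

/-- Polynomial antiderivative. -/
def antider (p : ℝ[X]) : ℝ[X] := p.sum fun k a => C (a / (k + 1)) * X ^ (k + 1)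

/-- Antiderivative of `legP n` vanishing at `-1`. -/
def legQ (n : ℕ) : ℝ[X] := antider (legP n) - C ((antider (legP n)).eval (-1))

lemma derivative_antider (p : ℝ[X]) : derivative (antider p) = p := by
  rw [antider, Polynomial.sum, map_sum]
  conv_rhs => rw [← Polynomial.sum_C_mul_X_pow_eq p]
  rw [Polynomial.sum]
  refine Finset.sum_congr rfl fun k hk => ?_
  rw [derivative_C_mul, derivative_X_pow]
  rw [← mul_assoc, ← C_mul, Nat.add_sub_cancel, Nat.cast_add, Nat.cast_one, div_mul_cancel₀]
  positivity

lemma natDegree_antider_le (p : ℝ[X]) : (antider p).natDegree ≤ p.natDegree + 1 := by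
  refine (Polynomial.natDegree_sum_le _ _).trans ?_
  rw [Finset.fold_max_le]
  refine ⟨Nat.zero_le _, fun k hk => ?_⟩
  refine (natDegree_C_mul_le _ _).trans ?_
  rw [natDegree_X_pow]
  exact Nat.add_le_add_right (Polynomial.le_natDegree_of_mem_supp _ hk) 1

lemma iteratedDeriv_eval (p : ℝ[X]) (n : ℕ) :
    iteratedDeriv n (fun y => p.eval y) = fun y => (derivative^[n] p).eval y := by
  induction n with
  | zero => simp
  | succ k ih =>
    rw [iteratedDeriv_succ, ih, Function.iterate_succ_apply']
    funext y
    exact Polynomial.deriv _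

lemma legendreP_eq_eval (n : ℕ) (x : ℝ) : legendreP n x = (legP n).eval x := by
  have h : (fun y : ℝ => (y ^ 2 - 1) ^ n) = fun y => ((((X:ℝ[X])^2 - 1))^n).eval y := by
    funext y; simp
  rw [legendreP, legP, h, iteratedDeriv_eval, eval_mul, eval_C]

lemma natDegree_X2 : ((X:ℝ[X])^2 - 1).natDegree = 2 := by
  have h : ((X:ℝ[X])^2 - 1) = X^2 - C 1 := by simp
  rw [h, natDegree_X_pow_sub_C]

lemma monic_X2 : ((X:ℝ[X])^2 - 1).Monic := by
  have h : ((X:ℝ[X])^2 - 1) = X^2 - C 1 := by simp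
  rw [h]; exact monic_X_pow_sub_C _ (by norm_num)

lemma natDegree_legF (n : ℕ) : ((((X:ℝ[X])^2 - 1))^n).natDegree = 2 * n := by
  rw [monic_X2.natDegree_pow, natDegree_X2]; ring

lemma coeff_legF_top (n : ℕ) : ((((X:ℝ[X])^2 - 1)^n)).coeff (2*n) = 1 := by
  have h := (monic_X2.pow (n := n)).leadingCoeff
  rwa [leadingCoeff, natDegree_legF] at h

lemma coeff_iter_legF (n : ℕ) : (derivative^[n] ((((X:ℝ[X])^2 - 1))^n)).coeff n
    = (Nat.factorial (2*n) : ℝ) / Nat.factorial n := by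
  rw [coeff_iterate_derivative]
  have h2 : n + n = 2 * n := by ring
  rw [h2, coeff_legF_top, nsmul_eq_mul, mul_one]
  have h := Nat.factorial_mul_descFactorial (n := 2*n) (k := n) (by omega)
  have h3 : 2*n - n = n := by omega
  rw [h3] at h
  field_simp
  rw [mul_comm, ← Nat.cast_mul, h]

lemma natDegree_legP_le (n : ℕ) : (legP n).natDegree ≤ n := by
  refine (natDegree_C_mul_le _ _).trans ?_
  refine (natDegree_iterate_derivative _ _).trans ?_
  rw [natDegree_legF]; omega

lemma coeff_legP_self (n : ℕ) :
    (legP n).coeff n = Nat.factorial (2 * n) / ((2:ℝ) ^ n * (Nat.factorial n) ^ 2) := by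
  rw [legP, coeff_C_mul, coeff_iter_legF]
  have h : ((Nat.factorial n : ℝ)) ≠ 0 := by positivity
  field_simp

lemma derivative_legQ (n : ℕ) : derivative (legQ n) = legP n := by
  rw [legQ, derivative_sub, derivative_C, sub_zero, derivative_antider]

lemma legQ_eval_neg_one (n : ℕ) : (legQ n).eval (-1) = 0 := by
  simp [legQ]

lemma natDegree_legQ_le (n : ℕ) : (legQ n).natDegree ≤ n + 1 := by
  refine (natDegree_sub_le _ _).trans ?_
  simp only [natDegree_C, max_le_iff]
  exact ⟨(natDegree_antider_le _).trans (by have := natDegree_legP_le n; omega), by omega⟩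

lemma coeff_legQ (n k : ℕ) : (legQ n).coeff (k + 1) = (legP n).coeff k / (k + 1) := by
  have h := derivative_legQ n
  have h2 : (derivative (legQ n)).coeff k = (legP n).coeff k := by rw [h]
  rw [coeff_derivative] at h2
  have hk : ((k:ℝ) + 1) ≠ 0 := by positivity
  field_simp
  linear_combination h2

lemma iter_div (n : ℕ) : ∀ k, k ≤ n →
    ∃ q : ℝ[X], derivative^[k] ((((X:ℝ[X])^2 - 1))^n) = ((X:ℝ[X]) ^ 2 - 1) ^ (n - k) * q := by
  intro k
  induction k with
  | zero => intro _; exact ⟨1, by simp⟩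
  | succ k ih =>
    intro hk
    obtain ⟨q, hq⟩ := ih (by omega)
    have hnk : n - k = (n - (k+1)) + 1 := by omega
    refine ⟨((n - (k+1) + 1 : ℕ) : ℝ[X]) * (2 * X) * q + ((X:ℝ[X])^2 - 1) * derivative q, ?_⟩
    rw [Function.iterate_succ_apply', hq, hnk, derivative_mul, derivative_pow]
    generalize n - (k+1) = m
    have hd : derivative ((X:ℝ[X])^2 - 1) = 2 * X := by
      simp [derivative_pow]; rw [map_ofNat]
    rw [hd, Nat.add_sub_cancel, pow_succ, Polynomial.C_eq_natCast]
    ring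

lemma iter_eval (n k : ℕ) (hk : k < n) (x : ℝ) (hx : x ^ 2 = 1) :
    (derivative^[k] ((((X:ℝ[X])^2 - 1))^n)).eval x = 0 := by
  obtain ⟨q, hq⟩ := iter_div n k (le_of_lt hk)
  rw [hq, eval_mul, eval_pow]
  simp only [eval_sub, eval_pow, eval_one, eval_X, hx, sub_self]
  rw [zero_pow (by omega), zero_mul]

lemma iter_const (m : ℕ) : ∀ q : ℝ[X], q.natDegree ≤ m →
    derivative^[m] q = C ((Nat.factorial m : ℝ) * q.coeff m) := by
  induction m with
  | zero =>
    intro q hq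
    obtain ⟨a, ha⟩ := Polynomial.natDegree_eq_zero.mp (le_antisymm hq (Nat.zero_le _))
    subst ha; simp
  | succ m ih =>
    intro q hq
    rw [Function.iterate_succ_apply, ih (derivative q)
      ((natDegree_derivative_le q).trans (by omega)), coeff_derivative, Nat.factorial_succ]
    push_cast
    ring_nf

lemma poly_intervalIntegrable (p : ℝ[X]) (a b : ℝ) :
    IntervalIntegrable (fun x => p.eval x) volume a b :=
  (p.continuous_aeval).intervalIntegrable a b

lemma poly_ftc (p : ℝ[X]) (a b : ℝ) :
    ∫ x in a..b, (derivative p).eval x = p.eval b - p.eval a := by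
  have hde : deriv (fun y : ℝ => p.eval y) = fun x => (derivative p).eval x :=
    funext fun x => Polynomial.deriv p
  have h := intervalIntegral.integral_deriv_eq_sub (f := fun y : ℝ => p.eval y) (a := a) (b := b)
    (fun x _ => (Polynomial.hasDerivAt p x).differentiableAt)
    (by rw [hde]; exact poly_intervalIntegrable _ a b)
  rwa [hde] at h

lemma poly_parts (p q : ℝ[X]) (a b : ℝ) :
    ∫ x in a..b, (derivative p).eval x * q.eval x =
      p.eval b * q.eval b - p.eval a * q.eval a -
        ∫ x in a..b, p.eval x * (derivative q).eval x := by
  have h := poly_ftc (p * q) a b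
  rw [derivative_mul] at h
  have hsplit : ∫ x in a..b, (derivative p * q + p * derivative q).eval x =
      (∫ x in a..b, (derivative p).eval x * q.eval x) +
        ∫ x in a..b, p.eval x * (derivative q).eval x := by
    rw [← intervalIntegral.integral_add ((poly_intervalIntegrable (derivative p * q) a b).congr
      (fun x _ => by simp))
      ((poly_intervalIntegrable (p * derivative q) a b).congr
      (fun x _ => by simp))]
    congr 1; funext x; simp
  rw [hsplit] at h
  simp only [eval_mul] at h
  linarith

lemma poly_int_add (p q : ℝ[X]) (a b : ℝ) :
    ∫ x in a..b, (p + q).eval x = (∫ x in a..b, p.eval x) + ∫ x in a..b, q.eval x := by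
  simp only [eval_add]
  exact intervalIntegral.integral_add (poly_intervalIntegrable p a b)
    (poly_intervalIntegrable q a b)

lemma poly_int_Cmul (c : ℝ) (p : ℝ[X]) (a b : ℝ) :
    ∫ x in a..b, (C c * p).eval x = c * ∫ x in a..b, p.eval x := by
  simp only [eval_mul, eval_C]
  exact intervalIntegral.integral_const_mul c _

lemma integral_legF (n : ℕ) :
    ∫ x in (-1:ℝ)..1, ((((X:ℝ[X])^2-1))^n).eval x =
      (-1) ^ n * 2 ^ (2 * n + 1) * (Nat.factorial n : ℝ) ^ 2 / Nat.factorial (2 * n + 1) := by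
  induction n with
  | zero => norm_num
  | succ n ih =>
    have hiden : derivative ((X:ℝ[X]) * ((X^2-1))^(n+1)) =
        C ((2*n+3 : ℕ) : ℝ) * ((X:ℝ[X])^2-1)^(n+1) + C ((2*n+2 : ℕ) : ℝ) * ((X:ℝ[X])^2-1)^n := by
      rw [derivative_mul, derivative_pow, derivative_X]
      have hd : derivative ((X:ℝ[X])^2 - 1) = 2 * X := by
        simp [derivative_pow]; rw [map_ofNat]
      rw [hd, Nat.add_sub_cancel]
      apply Polynomial.funext
      intro x
      simp only [eval_add, eval_mul, eval_pow, eval_sub, eval_one, eval_X, eval_natCast, eval_C,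
        eval_ofNat]
      push_cast
      ring
    have h0 := poly_ftc ((X:ℝ[X]) * ((X^2-1))^(n+1)) (-1) 1
    rw [hiden, poly_int_add, poly_int_Cmul, poly_int_Cmul, ih] at h0
    simp only [eval_mul, eval_pow, eval_X, eval_sub, eval_one] at h0
    norm_num at h0
    have hfact : (Nat.factorial (2 * (n+1) + 1) : ℝ)
        = (2*n+3) * ((2*n+2) * (Nat.factorial (2*n+1))) := by
      have h5 : 2 * (n+1) + 1 = (2*n+1) + 1 + 1 := by ring
      rw [h5, Nat.factorial_succ, Nat.factorial_succ]
      push_cast; ring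
    have hfne : (Nat.factorial (2*n+1) : ℝ) ≠ 0 := by positivity
    rw [hfact]
    field_simp at h0 ⊢
    push_cast [Nat.factorial_succ] at h0 ⊢
    simp only [eval_pow, eval_sub, eval_X, eval_one]
    linear_combination (2*(n:ℝ)+2) * h0

lemma parts_iter (n : ℕ) : ∀ i ≤ n, ∀ q : ℝ[X],
    ∫ x in (-1:ℝ)..1, (derivative^[n] ((((X:ℝ[X])^2-1))^n)).eval x * q.eval x =
      (-1) ^ i * ∫ x in (-1:ℝ)..1,
        (derivative^[n - i] ((((X:ℝ[X])^2-1))^n)).eval x * (derivative^[i] q).eval x := by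
  intro i
  induction i with
  | zero => intro _ q; simp
  | succ i ih =>
    intro hi q
    rw [ih (by omega) q]
    have hrw : derivative^[n - i] ((((X:ℝ[X])^2-1))^n)
        = derivative (derivative^[n - (i+1)] ((((X:ℝ[X])^2-1))^n)) := by
      rw [show n - i = (n - (i+1)) + 1 by omega, Function.iterate_succ_apply']
    rw [hrw, poly_parts]
    rw [iter_eval n (n - (i+1)) (by omega) 1 (by norm_num),
      iter_eval n (n - (i+1)) (by omega) (-1) (by norm_num)]
    rw [Function.iterate_succ_apply']
    ring

lemma key_integral (n : ℕ) (q : ℝ[X]) (hq : q.natDegree ≤ n) :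
    ∫ x in (-1:ℝ)..1, (legP n).eval x * q.eval x =
      q.coeff n * (2 ^ (n + 1) * (Nat.factorial n : ℝ) ^ 2 / Nat.factorial (2 * n + 1)) := by
  have h1 : ∫ x in (-1:ℝ)..1, (legP n).eval x * q.eval x
      = (1 / ((2:ℝ) ^ n * (Nat.factorial n))) *
        ∫ x in (-1:ℝ)..1, (derivative^[n] ((((X:ℝ[X])^2-1))^n)).eval x * q.eval x := by
    rw [← intervalIntegral.integral_const_mul]
    congr 1; funext x; simp [legP]; ring
  rw [h1, parts_iter n n le_rfl q, Nat.sub_self, Function.iterate_zero_apply,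
    iter_const n q hq]
  have h2 : ∫ x in (-1:ℝ)..1, ((((X:ℝ[X])^2-1))^n).eval x *
      (C ((Nat.factorial n : ℝ) * q.coeff n)).eval x
      = ((Nat.factorial n : ℝ) * q.coeff n) * ∫ x in (-1:ℝ)..1, ((((X:ℝ[X])^2-1))^n).eval x := by
    rw [← intervalIntegral.integral_const_mul]
    congr 1; funext x; simp; ring
  rw [h2, integral_legF]
  have hne : ((Nat.factorial n : ℝ)) ≠ 0 := by positivity
  field_simp
  ring_nf
  rw [show ((-1:ℝ))^(n*2) = 1 by rw [pow_mul']; norm_num]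
  ring_nf

def legA (m n : ℕ) : ℝ := ∫ x in (-1:ℝ)..1, (legP m).eval x * (legQ n).eval x

lemma integral_legP (n : ℕ) :
    ∫ x in (-1:ℝ)..1, (legP n).eval x = if n = 0 then 2 else 0 := by
  have h := key_integral n 1 (by simp)
  simp only [eval_one, mul_one] at h
  rw [h, Polynomial.coeff_one]
  rcases Nat.eq_zero_or_pos n with h0 | h0
  · subst h0; norm_num [Nat.factorial]
  · rw [if_neg (by omega), if_neg (by omega), zero_mul]

lemma legQ_eval_one (n : ℕ) : (legQ n).eval 1 = if n = 0 then 2 else 0 := by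
  have h := poly_ftc (legQ n) (-1) 1
  rw [derivative_legQ, legQ_eval_neg_one, sub_zero, integral_legP] at h
  exact h.symm

lemma legA_add_symm (m n : ℕ) :
    legA m n + legA n m = (legQ m).eval 1 * (legQ n).eval 1 := by
  have h := poly_ftc (legQ m * legQ n) (-1) 1
  rw [derivative_mul, derivative_legQ, derivative_legQ, poly_int_add] at h
  simp only [eval_mul, legQ_eval_neg_one, mul_zero, sub_zero] at h
  rw [legA, legA]
  simp only [mul_comm] at h ⊢
  exact h

lemma legA_of_lt (m n : ℕ) (h : n + 1 < m) : legA m n = 0 := by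
  rw [legA, key_integral m (legQ n) (le_of_lt (lt_of_le_of_lt (natDegree_legQ_le n) h)),
    Polynomial.coeff_eq_zero_of_natDegree_lt (lt_of_le_of_lt (natDegree_legQ_le n) h), zero_mul]

lemma legA_zero (m n : ℕ) (h : m + 2 ≤ n ∨ n + 2 ≤ m ∨ (m = n ∧ 1 ≤ m)) : legA m n = 0 := by
  have hsymm := legA_add_symm m n
  rcases h with h | h | ⟨rfl, h⟩
  · rw [legA_of_lt n m (by omega), legQ_eval_one n, if_neg (by omega), mul_zero] at hsymm
    linarith
  · exact legA_of_lt m n (by omega)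
  · rw [legQ_eval_one m, if_neg (by omega), mul_zero] at hsymm
    linarith

lemma legA_succ (n : ℕ) : legA (n + 1) n = 2 / ((2 * ↑n + 1) * (2 * (n:ℝ) + 3)) := by
  rw [legA, key_integral (n+1) (legQ n) (natDegree_legQ_le n), coeff_legQ, coeff_legP_self]
  have hfact : (Nat.factorial (2 * (n+1) + 1) : ℝ)
      = (2*n+3) * ((2*n+2) * ((2*n+1) * (Nat.factorial (2*n)))) := by
    have h5 : 2 * (n+1) + 1 = (2*n) + 1 + 1 + 1 := by ring
    rw [h5, Nat.factorial_succ, Nat.factorial_succ, Nat.factorial_succ]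
    push_cast; ring
  have h6 : (Nat.factorial (n+1) : ℝ) = (n+1) * Nat.factorial n := by
    rw [Nat.factorial_succ]; push_cast; ring
  rw [hfact, h6]
  have hne1 : (Nat.factorial n : ℝ) ≠ 0 := by positivity
  have hne2 : (Nat.factorial (2*n) : ℝ) ≠ 0 := by positivity
  have hne3 : ((n:ℝ)+1) ≠ 0 := by positivity
  have hne4 : (2*(n:ℝ)+1) ≠ 0 := by positivity
  have hne5 : (2*(n:ℝ)+3) ≠ 0 := by positivity
  have hne6 : (2*(n:ℝ)+2) ≠ 0 := by positivity
  have hne7 : ((2:ℝ)^n) ≠ 0 := by positivity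
  field_simp
  ring

lemma legA_symm_succ (n : ℕ) : legA n (n + 1) = -(2 / ((2 * ↑n + 1) * (2 * (n:ℝ) + 3))) := by
  have hsymm := legA_add_symm n (n+1)
  rw [legQ_eval_one (n+1), if_neg (by omega), mul_zero, legA_succ] at hsymm
  linarith

lemma legA_zero_zero : legA 0 0 = 2 := by
  have hsymm := legA_add_symm 0 0
  rw [legQ_eval_one, if_pos rfl] at hsymm
  linarith

lemma master (t T : ℝ) (ht : t < T) (m n : ℕ) :
    (∫ y in t..T, (Real.sqrt ((2*(m:ℝ)+1)/(T-t)) * (legP m).eval ((2*(y-t)-(T-t))/(T-t))) *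
      ∫ x in t..y, Real.sqrt ((2*(n:ℝ)+1)/(T-t)) * (legP n).eval ((2*(x-t)-(T-t))/(T-t))) =
    Real.sqrt ((2*(m:ℝ)+1)/(T-t)) * Real.sqrt ((2*(n:ℝ)+1)/(T-t)) * ((T-t)/2)^2 * legA m n := by
  have hΔ : (0:ℝ) < T - t := by linarith
  have hΔ0 : T - t ≠ 0 := ne_of_gt hΔ
  have hψ : ∀ y:ℝ, (2*(y-t)-(T-t))/(T-t) = (2/(T-t))*y + (-(2*t)/(T-t) - 1) := by
    intro y; field_simp; ring
  have hQden : ∀ (k : ℕ) (x : ℝ),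
      HasDerivAt (fun x:ℝ => (legQ k).eval ((2*(x-t)-(T-t))/(T-t)))
        ((legP k).eval ((2*(x-t)-(T-t))/(T-t)) * (2/(T-t))) x := by
    intro k x
    have h1 : HasDerivAt (fun x:ℝ => (2*(x-t)-(T-t))/(T-t)) (2/(T-t)) x := by
      have := ((((hasDerivAt_id x).sub_const t).const_mul 2).sub_const (T-t)).div_const (T-t)
      simpa using this
    have h2 := (Polynomial.hasDerivAt (legQ k) ((2*(x-t)-(T-t))/(T-t))).comp x h1
    rw [derivative_legQ] at h2
    exact h2
  set s2 := Real.sqrt ((2*(m:ℝ)+1)/(T-t)) with hs2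
  set s1 := Real.sqrt ((2*(n:ℝ)+1)/(T-t)) with hs1
  have hcont : ∀ (p : ℝ[X]) (c : ℝ), Continuous (fun x:ℝ => c * p.eval ((2*(x-t)-(T-t))/(T-t))) := by
    intro p c
    exact continuous_const.mul (p.continuous_aeval.comp (by fun_prop))
  have hinner : ∀ y:ℝ, (∫ x in t..y, s1 * (legP n).eval ((2*(x-t)-(T-t))/(T-t))) =
      s1 * ((T-t)/2) * (legQ n).eval ((2*(y-t)-(T-t))/(T-t)) := by
    intro y
    have hg : ∀ x:ℝ, HasDerivAt
        (fun x => s1 * ((T-t)/2) * (legQ n).eval ((2*(x-t)-(T-t))/(T-t)))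
        (s1 * (legP n).eval ((2*(x-t)-(T-t))/(T-t))) x := by
      intro x
      have := (hQden n x).const_mul (s1 * ((T-t)/2))
      have h2 : (T-t)/2 * (2/(T-t)) = 1 := by field_simp
      exact this.congr_deriv (by linear_combination (s1 * (legP n).eval ((2*(x-t)-(T-t))/(T-t))) * h2)
    have hint := intervalIntegral.integral_eq_sub_of_hasDerivAt
      (f := fun x => s1 * ((T-t)/2) * (legQ n).eval ((2*(x-t)-(T-t))/(T-t)))
      (a := t) (b := y) (fun x _ => hg x) ((hcont (legP n) s1).intervalIntegrable t y)
    rw [hint]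
    have htval : (2*(t-t)-(T-t))/(T-t) = -1 := by field_simp; ring
    simp only [htval, legQ_eval_neg_one, mul_zero, sub_zero]
  have houter : ∫ y in t..T, (legP m * legQ n).eval ((2*(y-t)-(T-t))/(T-t)) =
      ((T-t)/2) * legA m n := by
    have hc : (2/(T-t)) ≠ 0 := by positivity
    have h := intervalIntegral.integral_comp_mul_add (a := t) (b := T)
      (f := fun u => (legP m * legQ n).eval u) hc (-(2*t)/(T-t) - 1)
    simp only [hψ]
    rw [h]
    have e1 : 2/(T-t)*t + (-(2*t)/(T-t) - 1) = -1 := by field_simp; ring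
    have e2 : 2/(T-t)*T + (-(2*t)/(T-t) - 1) = 1 := by field_simp; ring
    rw [e1, e2, smul_eq_mul]
    have hi : (2/(T-t))⁻¹ = (T-t)/2 := by
      rw [div_eq_mul_inv, mul_inv, inv_inv]; field_simp
    rw [hi, legA]
    simp only [eval_mul]
  simp only [hinner]
  have hpull : ∫ y in t..T, (s2 * (legP m).eval ((2*(y-t)-(T-t))/(T-t))) *
      (s1 * ((T-t)/2) * (legQ n).eval ((2*(y-t)-(T-t))/(T-t))) =
      (s2 * (s1 * ((T-t)/2))) * ∫ y in t..T, (legP m * legQ n).eval ((2*(y-t)-(T-t))/(T-t)) := by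
    rw [← intervalIntegral.integral_const_mul]
    congr 1; funext y; simp only [eval_mul]; ring
  rw [hpull, houter]
  ring

/-- The Fourier–Legendre coefficients `C_{j₂j₁} = ∫_t^T φ_{j₂}(y) ∫_t^y φ_{j₁}(x) dx dy`
of the kernel of the double stochastic integral `I₀₀`: `C₀₀ = Δ/2`,
`C_{j,j−1} = Δ/(2√(4j²−1))`, `C_{j−1,j} = −Δ/(2√(4j²−1))` for `j ≥ 1`, and all
remaining coefficients vanish. -/
theorem stmt_10 (t T : ℝ) (ht : t < T)
    (φ : ℕ → ℝ → ℝ)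
    (hφ : ∀ (n : ℕ) (x : ℝ), φ n x =
      Real.sqrt ((2 * (n : ℝ) + 1) / (T - t)) *
        legendreP n ((2 * (x - t) - (T - t)) / (T - t)))
    (C : ℕ → ℕ → ℝ)
    (hC : ∀ j2 j1 : ℕ, C j2 j1 = ∫ y in t..T, φ j2 y * ∫ x in t..y, φ j1 x) :
    C 0 0 = (T - t) / 2 ∧
    (∀ j : ℕ, 1 ≤ j →
      C j (j - 1) = (T - t) / (2 * Real.sqrt (4 * (j : ℝ) ^ 2 - 1)) ∧
      C (j - 1) j = -((T - t) / (2 * Real.sqrt (4 * (j : ℝ) ^ 2 - 1)))) ∧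
    (∀ j1 j2 : ℕ, (j1 + 2 ≤ j2 ∨ j2 + 2 ≤ j1 ∨ (j1 = j2 ∧ 1 ≤ j1)) → C j2 j1 = 0) := by
  have hΔ : (0:ℝ) < T - t := by linarith
  have key : ∀ m n : ℕ, C m n =
      Real.sqrt ((2*(m:ℝ)+1)/(T-t)) * Real.sqrt ((2*(n:ℝ)+1)/(T-t)) * ((T-t)/2)^2 *
        legA m n := by
    intro m n
    rw [hC m n]
    simp only [hφ, legendreP_eq_eval]
    exact master t T ht m n
  have hsq : ∀ n : ℕ, Real.sqrt ((2*((n:ℝ)+1)+1)/(T-t)) * Real.sqrt ((2*(n:ℝ)+1)/(T-t)) *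
      ((T-t)/2)^2 * (2 / ((2 * (n:ℝ) + 1) * (2 * (n:ℝ) + 3)))
      = (T-t) / (2 * Real.sqrt (4 * ((n:ℝ)+1) ^ 2 - 1)) := by
    intro n
    have ha : (0:ℝ) ≤ (2*((n:ℝ)+1)+1)/(T-t) := by positivity
    have hab : (2*((n:ℝ)+1)+1)/(T-t) * ((2*(n:ℝ)+1)/(T-t))
        = ((2*(n:ℝ)+1)*(2*(n:ℝ)+3))/(T-t)^2 := by
      field_simp; ring
    have harg : 4 * ((n:ℝ)+1) ^ 2 - 1 = (2*(n:ℝ)+1)*(2*(n:ℝ)+3) := by ring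
    rw [← Real.sqrt_mul ha, hab, Real.sqrt_div' _ (by positivity), Real.sqrt_sq hΔ.le, harg]
    have hw2 : (Real.sqrt ((2*(n:ℝ)+1)*(2*(n:ℝ)+3)))^2 = (2*(n:ℝ)+1)*(2*(n:ℝ)+3) :=
      Real.sq_sqrt (by positivity)
    have hwpos : 0 < Real.sqrt ((2*(n:ℝ)+1)*(2*(n:ℝ)+3)) :=
      Real.sqrt_pos.mpr (by positivity)
    rw [← hw2]
    field_simp
    ring
    rw [Real.sqrt_sq (Real.sqrt_nonneg _)]
  refine ⟨?_, ?_, ?_⟩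
  · rw [key 0 0, legA_zero_zero]
    rw [Real.mul_self_sqrt (by positivity)]
    push_cast
    field_simp
    ring
  · intro j hj
    obtain ⟨n, rfl⟩ : ∃ n, j = n + 1 := ⟨j - 1, by omega⟩
    simp only [Nat.add_sub_cancel]
    constructor
    · rw [key (n+1) n, legA_succ]
      push_cast
      exact hsq n
    · rw [key n (n+1), legA_symm_succ]
      push_cast
      rw [show Real.sqrt ((2*(n:ℝ)+1)/(T-t)) * Real.sqrt ((2*((n:ℝ)+1)+1)/(T-t)) * ((T-t)/2)^2 *
          -(2 / ((2 * (n:ℝ) + 1) * (2 * (n:ℝ) + 3)))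
          = -(Real.sqrt ((2*((n:ℝ)+1)+1)/(T-t)) * Real.sqrt ((2*(n:ℝ)+1)/(T-t)) * ((T-t)/2)^2 *
            (2 / ((2 * (n:ℝ) + 1) * (2 * (n:ℝ) + 3)))) from by ring]
      rw [hsq n]
  · intro j1 j2 h
    rw [key j2 j1, legA_zero j2 j1 (by omega), mul_zero]

end LegAux
end

section
/- The following identity of convergent series of real numbers holds: 2·Σ_{i=2}^{∞} 1/(4i²−1) + Σ_{i=1}^{∞} 1/((2i−1)²(2i+3)²) + Σ_{i=0}^{∞} ((i+2)² + (i+1)²)/((2i+1)(2i+5)(2i+3)²) = 5/9. -/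
open Filter Topology

private lemma telescope_hasSum (u : ℕ → ℝ) (h0 : Tendsto u atTop (𝓝 0))
    (hpos : ∀ n, 0 ≤ u n - u (n + 1)) :
    HasSum (fun n => u n - u (n + 1)) (u 0) := by
  rw [hasSum_iff_tendsto_nat_of_nonneg hpos]
  have : (fun n => ∑ i ∈ Finset.range n, (u i - u (i + 1))) = fun n => u 0 - u n := by
    funext n; exact Finset.sum_range_sub' u n
  rw [this]
  simpa using tendsto_const_nhds.sub h0

private lemma sq_inv_summable : Summable (fun i : ℕ => 1 / ((i : ℝ) + 1) ^ 2) := by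
  have := (summable_nat_add_iff (f := fun n : ℕ => 1 / (n : ℝ) ^ 2) 1).2
    (Real.summable_one_div_nat_pow.2 one_lt_two)
  simpa using this

private lemma tendsto_one_div_lin (a b : ℝ) (ha : 0 < a) :
    Tendsto (fun n : ℕ => 1 / (a * (n : ℝ) + b)) atTop (𝓝 0) := by
  have h : Tendsto (fun n : ℕ => a * (n : ℝ) + b) atTop atTop :=
    tendsto_atTop_add_const_right _ b (tendsto_natCast_atTop_atTop.const_mul_atTop ha)
  simpa [one_div, Pi.inv_def] using h.inv_tendsto_atTop

/-- Identity of convergent series: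
`2·Σ_{i=2}^∞ 1/(4i²−1) + Σ_{i=1}^∞ 1/((2i−1)²(2i+3)²)
  + Σ_{i=0}^∞ ((i+2)²+(i+1)²)/((2i+1)(2i+5)(2i+3)²) = 5/9`. -/
theorem stmt_15 :
    2 * (∑' i : ℕ, (1 : ℝ) / (4 * ((i : ℝ) + 2) ^ 2 - 1))
      + (∑' i : ℕ, (1 : ℝ) /
          ((2 * ((i : ℝ) + 1) - 1) ^ 2 * (2 * ((i : ℝ) + 1) + 3) ^ 2))
      + (∑' i : ℕ, (((i : ℝ) + 2) ^ 2 + ((i : ℝ) + 1) ^ 2) /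
          ((2 * (i : ℝ) + 1) * (2 * (i : ℝ) + 5) * (2 * (i : ℝ) + 3) ^ 2))
      = 5 / 9 := by
  have hd1 : ∀ i : ℕ, (0:ℝ) < 2 * (i : ℝ) + 1 := fun i => by positivity
  have hd3 : ∀ i : ℕ, (0:ℝ) < 2 * (i : ℝ) + 3 := fun i => by positivity
  have hd5 : ∀ i : ℕ, (0:ℝ) < 2 * (i : ℝ) + 5 := fun i => by positivity
  set B : ℕ → ℝ := fun i => (1 : ℝ) /
      ((2 * ((i : ℝ) + 1) - 1) ^ 2 * (2 * ((i : ℝ) + 1) + 3) ^ 2) with hB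
  set C : ℕ → ℝ := fun i => (((i : ℝ) + 2) ^ 2 + ((i : ℝ) + 1) ^ 2) /
      ((2 * (i : ℝ) + 1) * (2 * (i : ℝ) + 5) * (2 * (i : ℝ) + 3) ^ 2) with hC
  have hBalt : ∀ i : ℕ, B i = 1 / ((2 * (i:ℝ) + 1) ^ 2 * (2 * (i:ℝ) + 5) ^ 2) := by
    intro i; rw [hB]; dsimp only; ring_nf
  -- first sum
  have hA : HasSum (fun i : ℕ => (1 : ℝ) / (4 * ((i : ℝ) + 2) ^ 2 - 1)) (1 / 6) := by
    have hfun : (fun i : ℕ => (1 : ℝ) / (4 * ((i : ℝ) + 2) ^ 2 - 1))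
        = fun n : ℕ => (1/2) / (2 * (n:ℝ) + 3) - (1/2) / (2 * ((n+1 : ℕ):ℝ) + 3) := by
      funext n
      have h3 := (hd3 n).ne'
      have h5 := (hd5 n).ne'
      push_cast
      rw [div_sub_div _ _ (by exact h3) (by
        intro h; apply h5; linarith [h] <;> linarith)]
      · rw [div_eq_div_iff (by nlinarith [hd3 n, hd5 n]) (by positivity <;> skip)]
        ring
    rw [hfun]
    have := telescope_hasSum (fun n : ℕ => (1/2) / (2 * (n:ℝ) + 3))
      (by simpa [div_eq_mul_inv] using (tendsto_one_div_lin 2 3 two_pos).const_mul (1/2 : ℝ))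
      (fun n => by
        have h1 := hd3 n; have h2 := hd3 (n+1)
        push_cast at h2 ⊢
        rw [sub_nonneg]
        apply div_le_div_of_nonneg_left (by norm_num) h1
        linarith)
    convert this using 1
    norm_num
  -- positivity facts
  have hBnn : ∀ i, 0 ≤ B i := fun i => by
    rw [hBalt i]
    have h1 := hd1 i; have h5 := hd5 i
    positivity
  have hCnn : ∀ i, 0 ≤ C i := fun i => by
    have h1 := hd1 i; have h3 := hd3 i; have h5 := hd5 i
    rw [hC]; dsimp only; positivity
  have hBsum : Summable B := by
    refine Summable.of_nonneg_of_le hBnn (fun i => ?_) sq_inv_summable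
    rw [hBalt i]
    have h1 := hd1 i; have h5 := hd5 i
    have hi : (0:ℝ) < (i:ℝ) + 1 := by positivity
    rw [div_le_div_iff₀ (by positivity) (by positivity)]
    nlinarith [sq_nonneg ((i:ℝ)+1), sq_nonneg ((i:ℝ))]
  have hCsum : Summable C := by
    refine Summable.of_nonneg_of_le hCnn (fun i => ?_) (sq_inv_summable.mul_left 2)
    have h1 := hd1 i; have h3 := hd3 i; have h5 := hd5 i
    have hi : (0:ℝ) < (i:ℝ) + 1 := by positivity
    rw [hC]; dsimp only
    rw [mul_one_div, div_le_div_iff₀ (by positivity) (by positivity)]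
    nlinarith [sq_nonneg ((i:ℝ)), sq_nonneg ((i:ℝ)+1), sq_nonneg ((i:ℝ)+2)]
  -- combined telescoping for B + C
  have hBC : HasSum (fun i => B i + C i) (2 / 9) := by
    set v : ℕ → ℝ := fun n =>
      (1/16) * (1 / (2 * (n:ℝ) + 1) ^ 2 - 1 / (2 * (n:ℝ) + 3) ^ 2)
        + (1/8) * (1 / (2 * (n:ℝ) + 1) + 1 / (2 * (n:ℝ) + 3)) with hv
    have hv0 : v 0 = 2 / 9 := by norm_num [hv]
    have hlim : Tendsto v atTop (𝓝 0) := by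
      rw [hv]
      have l1 := tendsto_one_div_lin 2 1 two_pos
      have l3 := tendsto_one_div_lin 2 3 two_pos
      have l1s : Tendsto (fun n : ℕ => 1 / (2 * (n:ℝ) + 1) ^ 2) atTop (𝓝 0) := by
        have := l1.mul l1
        simp only [div_mul_div_comm, one_mul, ← sq] at this
        simpa using this
      have l3s : Tendsto (fun n : ℕ => 1 / (2 * (n:ℝ) + 3) ^ 2) atTop (𝓝 0) := by
        have := l3.mul l3
        simp only [div_mul_div_comm, one_mul, ← sq] at this
        simpa using this
      have := (((l1s.sub l3s).const_mul (1/16:ℝ)).add ((l1.add l3).const_mul (1/8:ℝ)))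
      simpa using this
    have key : ∀ n : ℕ, B n + C n = v n - v (n + 1) := by
      intro n
      have h1 := (hd1 n).ne'; have h3 := (hd3 n).ne'; have h5 := (hd5 n).ne'
      have h7 : (2 * (n:ℝ) + 7) ≠ 0 := by positivity
      rw [hBalt n, hC, hv]
      dsimp only
      push_cast
      have e1 : 2 * ((n:ℝ) + 1) + 1 = 2 * (n:ℝ) + 3 := by ring
      have e2 : 2 * ((n:ℝ) + 1) + 3 = 2 * (n:ℝ) + 5 := by ring
      rw [e1, e2]
      field_simp
      ring
    have hfun2 : (fun i => B i + C i) = fun n => v n - v (n + 1) := funext key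
    rw [hfun2]
    have := telescope_hasSum v hlim
      (fun n => (key n) ▸ add_nonneg (hBnn n) (hCnn n))
    rwa [hv0] at this
  have hsum : (∑' i, B i) + (∑' i, C i) = 2 / 9 := by
    rw [← Summable.tsum_add hBsum hCsum, hBC.tsum_eq]
  rw [hA.tsum_eq, add_assoc, hsum]
  norm_num
end
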